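/- Let d ≥ 2 be an integer and 1 < b < (d+1)/(d−1) a real number, and let λ₀ be as below. Then for every k ∈ {1, …, d−1}, the closure of the image (f_{λ₀,1} ∘ f_{λ₀,k})(Arc(1, λ₀)) is contained in the open arc Arc(1, λ₀); in particular f_{λ₀,k}(λ₀) ∈ Arc(1, λ₀). -/

import Mathlib

open Complex

/-- The semigroup generator `f_{λ,k}(z) = λ·((z+b)/(bz+1))^k`. -/
noncomputable def fl (b : ℝ) (lam : ℂ) (k : ℕ) (z : ℂ) : ℂ :=
  lam * ((z + (b : ℂ)) / ((b : ℂ) * z + 1)) ^ k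

/-- The angle in `[0, 2π)` of the counterclockwise arc from `α` to `β` on the unit circle. -/
noncomputable def arcAngle (α β : ℂ) : ℝ :=
  if (β / α).arg < 0 then (β / α).arg + 2 * Real.pi else (β / α).arg

/-- The open counterclockwise circular arc from `α` to `β`. -/
def openArc (α β : ℂ) : Set ℂ :=
  {z | ∃ t : ℝ, 0 < t ∧ t < arcAngle α β ∧ z = α * Complex.exp (t * Complex.I)}

/-- The circle angle function: `(e^{iθ}+b)/(be^{iθ}+1) = e^{i·gg b θ}`. -/
noncomputable def gg (b θ : ℝ) : ℝ := 2 * Real.arctan (Real.sin θ / (b + Real.cos θ)) - θ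

lemma bc_pos {b : ℝ} (hb : 1 < b) (θ : ℝ) : 0 < b + Real.cos θ := by
  have := Real.neg_one_le_cos θ; linarith

lemma quad_pos {b : ℝ} (hb : 1 < b) (θ : ℝ) : 0 < b^2 + 2*b*Real.cos θ + 1 := by
  have h1 := Real.neg_one_le_cos θ
  nlinarith

lemma mobius {b : ℝ} (hb : 1 < b) (θ : ℝ) :
    (Complex.exp (θ * I) + (b:ℂ)) / ((b:ℂ) * Complex.exp (θ * I) + 1)
      = Complex.exp ((gg b θ : ℝ) * I) := by
  have hden : (0:ℝ) < b + Real.cos θ := bc_pos hb θ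
  simp only [gg]
  set u : ℝ := Real.sin θ / (b + Real.cos θ) with hu_def
  have hu : (b + Real.cos θ) * u = Real.sin θ := by
    rw [hu_def, mul_div_assoc', mul_comm, mul_div_assoc, div_self hden.ne', mul_one]
  clear_value u
  have huC : ((b:ℂ) + (Real.cos θ:ℂ)) * (u:ℂ) = (Real.sin θ:ℂ) := by
    exact_mod_cast congrArg Complex.ofReal hu
  have hsc : (Real.sin θ:ℂ)^2 + (Real.cos θ:ℂ)^2 = 1 := by
    exact_mod_cast congrArg Complex.ofReal (Real.sin_sq_add_cos_sq θ)
  have h1 : Complex.exp (θ * I) + (b:ℂ) = ((b:ℂ) + (Real.cos θ:ℂ)) * (1 + (u:ℂ) * I) := by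
    rw [Complex.exp_mul_I, ← Complex.ofReal_cos, ← Complex.ofReal_sin]
    linear_combination (-I) * huC
  have h2 : (b:ℂ) * Complex.exp (θ * I) + 1
      = Complex.exp (θ * I) * (((b:ℂ) + (Real.cos θ:ℂ)) * (1 - (u:ℂ) * I)) := by
    rw [Complex.exp_mul_I, ← Complex.ofReal_cos, ← Complex.ofReal_sin]
    linear_combination ((Real.cos θ:ℂ)*I + (Real.sin θ:ℂ)*I^2) * huC
      + (Real.sin θ:ℂ)^2 * Complex.I_sq - hsc
  have h1u : (1:ℂ) - (u:ℂ) * I ≠ 0 := by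
    intro h
    have := congrArg Complex.re h
    simp at this
  have hu2 : ((1:ℂ) + (u:ℂ)^2) ≠ 0 := by
    exact_mod_cast (by positivity : (0:ℝ) < 1 + u^2).ne'
  have hsq : Real.sqrt (1 + u^2) ^ 2 = 1 + u^2 := Real.sq_sqrt (by positivity)
  have hsqne : Real.sqrt (1 + u^2) ≠ 0 := by positivity
  have hcos2 : 2 * (1 / Real.sqrt (1 + u^2))^2 - 1 = (1 - u^2)/(1 + u^2) := by
    rw [div_pow, one_pow, hsq]
    field_simp
    ring
  have hsin2 : 2 * (u / Real.sqrt (1 + u^2)) * (1 / Real.sqrt (1 + u^2)) = 2*u/(1 + u^2) := by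
    rw [mul_assoc, div_mul_div_comm, mul_one,
      Real.mul_self_sqrt (by positivity : (0:ℝ) ≤ 1 + u^2)]
    ring
  have h4 : Complex.exp ((2 * Real.arctan u : ℝ) * I) = (1 + (u:ℂ)*I) / (1 - (u:ℂ)*I) := by
    rw [Complex.exp_mul_I, ← Complex.ofReal_cos, ← Complex.ofReal_sin,
      Real.cos_two_mul, Real.sin_two_mul, Real.cos_arctan, Real.sin_arctan, hcos2, hsin2]
    rw [eq_div_iff h1u]
    push_cast
    field_simp
    linear_combination (-2*(u:ℂ)^2) * Complex.I_sq
  have h3 : Complex.exp (((2*Real.arctan u - θ : ℝ)) * I)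
      = Complex.exp ((2*Real.arctan u : ℝ) * I) * (Complex.exp (θ*I))⁻¹ := by
    rw [← Complex.exp_neg, ← Complex.exp_add]
    congr 1
    push_cast
    ring
  have hbcne : ((b:ℂ) + (Real.cos θ:ℂ)) ≠ 0 := by
    exact_mod_cast hden.ne'
  have hexpne : Complex.exp (θ * I) ≠ 0 := Complex.exp_ne_zero _
  rw [h1, h2, h3, h4]
  rw [← div_div, div_eq_mul_inv ((1:ℂ) + (u:ℂ)*I), ← div_eq_mul_inv]
  rw [div_div, ← div_eq_mul_inv, div_div,
    div_eq_div_iff (mul_ne_zero hexpne (mul_ne_zero hbcne h1u)) (mul_ne_zero h1u hexpne)]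
  ring

lemma gg_hasDeriv {b : ℝ} (hb : 1 < b) (θ : ℝ) :
    HasDerivAt (gg b) ((1 - b^2) / (b^2 + 2*b*Real.cos θ + 1)) θ := by
  have hden : (0:ℝ) < b + Real.cos θ := bc_pos hb θ
  have hq := quad_pos hb θ
  have hs := Real.sin_sq_add_cos_sq θ
  have hu : HasDerivAt (fun θ => Real.sin θ / (b + Real.cos θ))
      ((Real.cos θ * (b + Real.cos θ) - Real.sin θ * (0 + -Real.sin θ)) / (b + Real.cos θ)^2) θ := by
    exact (Real.hasDerivAt_sin θ).div ((hasDerivAt_const θ b).add (Real.hasDerivAt_cos θ)) hden.ne'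
  have harct := (Real.hasDerivAt_arctan (Real.sin θ / (b + Real.cos θ))).comp θ hu
  have h := ((harct.const_mul 2).sub (hasDerivAt_id θ))
  refine h.congr_deriv ?_
  have e1 : Real.cos θ * (b + Real.cos θ) - Real.sin θ * (0 + -Real.sin θ) = b*Real.cos θ + 1 := by
    linear_combination hs
  have e2 : 1 + (Real.sin θ/(b+Real.cos θ))^2 = (b^2+2*b*Real.cos θ+1)/(b+Real.cos θ)^2 := by
    field_simp
    linear_combination hs
  rw [e1, e2, one_div_div]
  have hbc2 : (b + Real.cos θ)^2 ≠ 0 := by positivity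
  rw [eq_comm, eq_sub_iff_add_eq, div_add_one hq.ne', div_mul_div_comm, mul_comm ((b+Real.cos θ)^2), ← div_mul_div_comm,
    div_self hbc2, mul_one, mul_div_assoc']
  congr 1
  ring

lemma gg_anti {b : ℝ} (hb : 1 < b) : StrictAnti (gg b) := by
  apply strictAnti_of_deriv_neg
  intro x
  rw [(gg_hasDeriv hb x).deriv]
  apply div_neg_of_neg_of_pos
  · nlinarith
  · exact quad_pos hb x

lemma gg_zero (b : ℝ) : gg b 0 = 0 := by simp [gg]

lemma gg_cont {b : ℝ} (hb : 1 < b) : Continuous (gg b) := by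
  unfold gg
  apply Continuous.sub _ continuous_id
  apply Continuous.mul continuous_const
  exact Real.continuous_arctan.comp
    (Real.continuous_sin.div (continuous_const.add Real.continuous_cos) (fun x => (bc_pos hb x).ne'))

lemma flExp {b : ℝ} (hb : 1 < b) (μ θ : ℝ) (k : ℕ) :
    fl b (Complex.exp (μ * I)) k (Complex.exp (θ * I))
      = Complex.exp (((μ + k * gg b θ : ℝ)) * I) := by
  rw [fl, mobius hb θ, ← Complex.exp_nat_mul, ← Complex.exp_add]
  congr 1
  push_cast
  ring

lemma arcAngle_eq {θ₀ : ℝ} (h0 : 0 < θ₀) (hpi : θ₀ < Real.pi) :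
    arcAngle 1 (Complex.exp (θ₀ * I)) = θ₀ := by
  have harg : (Complex.exp (θ₀ * I) / 1).arg = θ₀ := by
    rw [div_one, Complex.exp_mul_I]
    exact Complex.arg_cos_add_sin_mul_I ⟨by linarith [Real.pi_pos], le_of_lt hpi⟩
  rw [arcAngle, harg]
  simp [not_lt.2 h0.le, h0.not_gt]

lemma mem_openArc' {θ₀ r : ℝ} (h0 : 0 < θ₀) (hpi : θ₀ < Real.pi) (hr0 : 0 < r) (hrθ : r < θ₀) :
    Complex.exp ((r:ℝ) * I) ∈ openArc 1 (Complex.exp (θ₀ * I)) := by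
  exact ⟨r, hr0, by rw [arcAngle_eq h0 hpi]; exact hrθ, by rw [one_mul]⟩

set_option maxHeartbeats 2000000 in
/-- Let `d ≥ 2` and `1 < b < (d+1)/(d−1)`, and let `λ₀` be as in the paper.  Then for
every `k ∈ {1,…,d−1}` the closure of `(f_{λ₀,1} ∘ f_{λ₀,k})(Arc(1,λ₀))` is contained
in the open arc `Arc(1,λ₀)`; in particular `f_{λ₀,k}(λ₀) ∈ Arc(1,λ₀)`. -/
theorem stmt16 (d : ℕ) (hd : 2 ≤ d) (b : ℝ) (hb1 : 1 < b)
    (hb2 : b < ((d : ℝ) + 1) / ((d : ℝ) - 1))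
    (θ₀ : ℝ) (hθ₀pos : 0 < θ₀) (hθ₀pi : θ₀ < Real.pi) (lam0 : ℂ)
    (hl0 : lam0 = Complex.exp (θ₀ * Complex.I))
    (hl0fix : fl b lam0 d lam0 = 1)
    (hl0min : ∀ θ : ℝ, 0 < θ → θ < θ₀ →
      fl b (Complex.exp (θ * Complex.I)) d (Complex.exp (θ * Complex.I)) ≠ 1) :
    ∀ k : ℕ, 1 ≤ k → k ≤ d - 1 →
      closure ((fun z => fl b lam0 1 (fl b lam0 k z)) '' openArc 1 lam0) ⊆
        openArc 1 lam0 ∧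
      fl b lam0 k lam0 ∈ openArc 1 lam0 := by
  intro k hk1 hkd
  have hπ := Real.pi_pos
  have hdR : (2:ℝ) ≤ (d:ℝ) := by exact_mod_cast hd
  have hd0 : (0:ℝ) < (d:ℝ) := by linarith
  have hkR1 : (1:ℝ) ≤ (k:ℝ) := by exact_mod_cast hk1
  have hkRd : (k:ℝ) + 1 ≤ (d:ℝ) := by exact_mod_cast (by omega : k + 1 ≤ d)
  have hanti := gg_anti hb1
  have hgg0 := gg_zero b
  -- step 1 : θ₀ + d · gg b θ₀ = 0
  have hfix : Complex.exp (((θ₀ + (d:ℝ) * gg b θ₀ : ℝ)) * I) = 1 := by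
    rw [← flExp hb1 θ₀ θ₀ d, ← hl0]; exact hl0fix
  obtain ⟨n, hn⟩ := Complex.exp_eq_one_iff.mp hfix
  have hn' : θ₀ + (d:ℝ) * gg b θ₀ = n * (2*Real.pi) := by
    have h2 : ((θ₀ + (d:ℝ)*gg b θ₀ : ℝ):ℂ) * I = (((n:ℝ)*(2*Real.pi) : ℝ):ℂ) * I := by
      rw [hn]; push_cast; ring
    exact_mod_cast mul_right_cancel₀ Complex.I_ne_zero h2
  have hggθ₀neg : gg b θ₀ < 0 := by
    have := hanti hθ₀pos
    rwa [hgg0] at this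
  have hnle : n ≤ 0 := by
    by_contra h
    push_neg at h
    have h1 : (1:ℝ) ≤ (n:ℝ) := by exact_mod_cast h
    nlinarith [hθ₀pos, hθ₀pi, hggθ₀neg, hd0]
  have hψ0 : θ₀ + (d:ℝ) * gg b θ₀ = 0 := by
    rcases eq_or_lt_of_le hnle with h | h
    · rw [hn', h]; simp
    · exfalso
      have hnle1 : (n:ℝ) ≤ -1 := by exact_mod_cast (by omega : n ≤ -1)
      have hψθ₀ : θ₀ + (d:ℝ) * gg b θ₀ ≤ -(2*Real.pi) := by
        rw [hn']; nlinarith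
      -- ψ has positive derivative at 0
      set ψ : ℝ → ℝ := fun t => t + (d:ℝ) * gg b t with hψdef
      have hψθ₀' : ψ θ₀ ≤ -(2*Real.pi) := hψθ₀
      have hψ0' : ψ 0 = 0 := by simp [hψdef, hgg0]
      set D : ℝ := 1 + (d:ℝ) * ((1 - b^2) / (b^2 + 2*b*Real.cos 0 + 1)) with hDdef
      have hψD : HasDerivAt ψ D 0 := by
        exact (hasDerivAt_id 0).add ((gg_hasDeriv hb1 0).const_mul (d:ℝ))
      have hbd : b * ((d:ℝ) - 1) < (d:ℝ) + 1 :=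
        (lt_div_iff₀ (by linarith : (0:ℝ) < (d:ℝ) - 1)).mp hb2
      have hDpos : 0 < D := by
        rw [hDdef, Real.cos_zero]
        have hnum : 0 < (b+1)^2 - (d:ℝ)*(b^2-1) := by nlinarith
        have hden : (0:ℝ) < b^2 + 2*b*1 + 1 := by nlinarith
        have : 1 + (d:ℝ) * ((1 - b^2) / (b^2 + 2*b*1 + 1))
            = ((b+1)^2 - (d:ℝ)*(b^2-1)) / (b^2 + 2*b*1 + 1) := by
          field_simp
          ring
        rw [this]
        positivity
      -- ψ is eventually positive to the right of 0
      have hslope : Filter.Tendsto (slope ψ 0) (nhdsWithin 0 (Set.Ioi 0)) (nhds D) := by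
        apply (hasDerivAt_iff_tendsto_slope.mp hψD).mono_left
        apply nhdsWithin_mono
        intro x hx
        exact Set.mem_compl_singleton_iff.mpr (ne_of_gt hx)
      have hev : ∀ᶠ t in nhdsWithin 0 (Set.Ioi 0), 0 < slope ψ 0 t :=
        hslope.eventually (eventually_gt_nhds hDpos)
      have hev2 : Set.Ioo (0:ℝ) θ₀ ∈ nhdsWithin (0:ℝ) (Set.Ioi 0) :=
        Ioo_mem_nhdsGT_of_mem ⟨le_refl 0, hθ₀pos⟩
      obtain ⟨c', hc'slope, hc'mem⟩ := (hev.and (Filter.eventually_mem_set.mpr hev2)).exists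
      have hc'0 : 0 < c' := hc'mem.1
      have hc'θ : c' < θ₀ := hc'mem.2
      have hψc' : 0 < ψ c' := by
        have : slope ψ 0 c' = ψ c' / c' := by
          rw [slope_def_field, hψ0', sub_zero, sub_zero]
        rw [this] at hc'slope
        exact (div_pos_iff.mp hc'slope).resolve_right (fun h => absurd hc'0 (not_lt.2 h.2.le)) |>.1
      -- IVT : ψ hits 0 strictly between c' and θ₀
      have hcont : Continuous ψ := continuous_id.add (continuous_const.mul (gg_cont hb1))
      have hIcc : (0:ℝ) ∈ Set.Icc (ψ θ₀) (ψ c') := ⟨by linarith [hπ, hψθ₀'], le_of_lt hψc'⟩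
      obtain ⟨c, hcmem, hψc⟩ := intermediate_value_Icc' (le_of_lt hc'θ) hcont.continuousOn hIcc
      have hc0 : 0 < c := lt_of_lt_of_le hc'0 hcmem.1
      have hcθ : c < θ₀ := by
        rcases lt_or_eq_of_le hcmem.2 with h | h
        · exact h
        · exfalso; rw [h] at hψc; linarith [hπ, hψθ₀']
      apply hl0min c hc0 hcθ
      rw [flExp hb1 c c d]
      have : (c + (d:ℝ) * gg b c) = 0 := hψc
      rw [this]
      simp
  have hgθ₀ : gg b θ₀ = -θ₀/(d:ℝ) := by
    rw [eq_div_iff hd0.ne']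
    linarith
  -- common bounds
  have hbound : ∀ t : ℝ, 0 ≤ t → t ≤ θ₀ →
      0 < θ₀ + (k:ℝ) * gg b t ∧ θ₀ + (k:ℝ) * gg b t ≤ θ₀ := by
    intro t ht0 htθ
    have h1 : gg b t ≤ 0 := by
      have := hanti.antitone ht0
      rwa [hgg0] at this
    have h2 : -θ₀/(d:ℝ) ≤ gg b t := by
      have := hanti.antitone htθ
      rwa [hgθ₀] at this
    constructor
    · have hk2 : (k:ℝ) * (-θ₀/(d:ℝ)) ≤ (k:ℝ) * gg b t :=
        mul_le_mul_of_nonneg_left h2 (by linarith)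
      have : (k:ℝ) * (θ₀/(d:ℝ)) < θ₀ := by
        rw [mul_div_assoc']
        rw [div_lt_iff₀ hd0]
        nlinarith
      have heq : (k:ℝ) * (-θ₀/(d:ℝ)) = -((k:ℝ) * (θ₀/(d:ℝ))) := by ring
      linarith
    · have : (k:ℝ) * gg b t ≤ 0 :=
        mul_nonpos_iff.mpr (Or.inl ⟨by linarith, h1⟩)
      linarith
  -- behaviour of the composed map on angles
  have hr : ∀ t : ℝ, 0 ≤ t → t ≤ θ₀ →
      0 < θ₀ + gg b (θ₀ + (k:ℝ) * gg b t) ∧ θ₀ + gg b (θ₀ + (k:ℝ) * gg b t) < θ₀ := by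
    intro t ht0 htθ
    obtain ⟨hs0, hsθ⟩ := hbound t ht0 htθ
    constructor
    · have h5 := hanti.antitone hsθ
      rw [hgθ₀, neg_div] at h5
      have hd1 : θ₀/(d:ℝ) < θ₀ := by
        rw [div_lt_iff₀ hd0]; nlinarith
      linarith
    · have := hanti hs0
      rw [hgg0] at this
      linarith
  constructor
  · -- closure statement
    set F : ℂ → ℂ := fun z => fl b lam0 1 (fl b lam0 k z) with hFdef
    have hF : ∀ t : ℝ, F (Complex.exp ((t:ℝ) * I))
        = Complex.exp (((θ₀ + gg b (θ₀ + (k:ℝ) * gg b t) : ℝ)) * I) := by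
      intro t
      simp only [hFdef, hl0]
      rw [flExp hb1 θ₀ t k, flExp hb1 θ₀ (θ₀ + (k:ℝ) * gg b t) 1]
      congr 1
      push_cast
      ring
    have himg : F '' ((fun t : ℝ => Complex.exp ((t:ℝ) * I)) '' Set.Icc 0 θ₀)
        = (fun t : ℝ => Complex.exp (((θ₀ + gg b (θ₀ + (k:ℝ) * gg b t) : ℝ)) * I)) '' Set.Icc 0 θ₀ := by
      rw [Set.image_image]
      exact Set.image_congr' hF
    have hcontin : Continuous (fun t : ℝ => Complex.exp (((θ₀ + gg b (θ₀ + (k:ℝ) * gg b t) : ℝ)) * I)) := by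
      apply Complex.continuous_exp.comp
      apply Continuous.mul _ continuous_const
      apply Complex.continuous_ofReal.comp
      exact continuous_const.add ((gg_cont hb1).comp
        (continuous_const.add (continuous_const.mul (gg_cont hb1))))
    have hTcomp : IsCompact ((fun t : ℝ => Complex.exp (((θ₀ + gg b (θ₀ + (k:ℝ) * gg b t) : ℝ)) * I)) '' Set.Icc 0 θ₀) :=
      isCompact_Icc.image hcontin
    have hAK : openArc 1 lam0 ⊆ (fun t : ℝ => Complex.exp ((t:ℝ) * I)) '' Set.Icc 0 θ₀ := by
      rintro z ⟨t, ht0, htθ, rfl⟩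
      rw [hl0, arcAngle_eq hθ₀pos hθ₀pi] at htθ
      exact ⟨t, ⟨le_of_lt ht0, le_of_lt htθ⟩, by rw [one_mul]⟩
    have hsub : F '' openArc 1 lam0
        ⊆ (fun t : ℝ => Complex.exp (((θ₀ + gg b (θ₀ + (k:ℝ) * gg b t) : ℝ)) * I)) '' Set.Icc 0 θ₀ := by
      rw [← himg]
      exact Set.image_mono hAK
    refine subset_trans (closure_minimal hsub hTcomp.isClosed) ?_
    rintro z ⟨t, htIcc, rfl⟩
    obtain ⟨hr1, hr2⟩ := hr t htIcc.1 htIcc.2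
    rw [hl0]
    exact mem_openArc' hθ₀pos hθ₀pi hr1 hr2
  · -- the point statement
    rw [hl0, flExp hb1 θ₀ θ₀ k]
    obtain ⟨hs0, hsθ⟩ := hbound θ₀ (le_of_lt hθ₀pos) (le_refl θ₀)
    have hlt : θ₀ + (k:ℝ) * gg b θ₀ < θ₀ := by
      have : (k:ℝ) * gg b θ₀ < 0 := mul_neg_of_pos_of_neg (lt_of_lt_of_le one_pos hkR1) hggθ₀neg
      linarith
    exact mem_openArc' hθ₀pos hθ₀pi hs0 hlt
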